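/- Let G and G' be finite connected simple graphs. Then the partially ordered sets C_G and C_{G'} of connected subgraphs are order-isomorphic (equivalently, homeomorphic with respect to their poset topologies) if and only if the graphs G and G' are isomorphic. -/
import Mathlib


/-- The poset topology on a partially ordered set `P`: the topology generated by the
principal down-sets `U_x = {y | y ≤ x}`. -/
def posetTopology (P : Type*) [PartialOrder P] : TopologicalSpace P :=
  TopologicalSpace.generateFrom {U : Set P | ∃ x : P, U = {y : P | y ≤ x}}

/-- The collection `C_G` of connected subgraphs of `G`, partially ordered by the subgraph
relation. -/
abbrev ConnSub {V : Type*} (G : SimpleGraph V) := {H : G.Subgraph // H.Connected}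

open SimpleGraph

section Aux

variable {V V' : Type*} {G : SimpleGraph V} {G' : SimpleGraph V'}

/-- The singleton subgraph as an element of `ConnSub G`. -/
def sng (G : SimpleGraph V) (v : V) : ConnSub G :=
  ⟨G.singletonSubgraph v, Subgraph.singletonSubgraph_connected⟩

lemma sng_injective (G : SimpleGraph V) : Function.Injective (sng G) := by
  intro v w h
  have : ({v} : Set V) = {w} := by
    have := congrArg (fun x : ConnSub G => x.val.verts) h
    simpa [sng, singletonSubgraph_verts] using this
  simpa using this

lemma sng_le_iff {v : V} {H : ConnSub G} : sng G v ≤ H ↔ v ∈ H.val.verts := by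
  rw [← Subtype.coe_le_coe]
  exact singletonSubgraph_le_iff v H.val

lemma isMin_iff {H : ConnSub G} : IsMin H ↔ ∃ v, H = sng G v := by
  constructor
  · intro hmin
    obtain ⟨v, hv⟩ := H.prop.nonempty
    have hle : sng G v ≤ H := sng_le_iff.2 hv
    exact ⟨v, le_antisymm (hmin hle) hle⟩
  · rintro ⟨v, rfl⟩
    intro K hK
    have hverts : K.val.verts = {v} := by
      have h1 : K.val.verts ⊆ {v} := by
        simpa [sng, singletonSubgraph_verts] using hK.1
      obtain ⟨u, hu⟩ := K.prop.nonempty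
      have : u = v := h1 hu
      subst this
      exact Set.eq_singleton_iff_unique_mem.2 ⟨hu, fun x hx => h1 hx⟩
    have : K.val = G.singletonSubgraph v :=
      (eq_singletonSubgraph_iff_verts_eq K.val).2 hverts
    exact le_of_eq (Subtype.ext this).symm

/-- The one-edge subgraph as an element of `ConnSub G`. -/
def edg {v w : V} (h : G.Adj v w) : ConnSub G :=
  ⟨G.subgraphOfAdj h, Subgraph.subgraphOfAdj_connected h⟩

lemma sng_lt_edg {v w : V} (h : G.Adj v w) : sng G v < edg h := by
  refine lt_of_le_of_ne (sng_le_iff.2 (show v ∈ (edg h).val.verts by simp [edg])) ?_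
  intro hEq
  have := congrArg (fun x : ConnSub G => x.val.verts) hEq
  simp only [sng, edg, singletonSubgraph_verts, subgraphOfAdj_verts] at this
  have hw : w ∈ ({v} : Set V) := by rw [this]; simp
  have hwv : w = v := by simpa using hw
  exact h.ne hwv.symm

/-- From a connected subgraph strictly containing a singleton, extract an edge at `v`. -/
lemma exists_edge_le {v : V} {E : ConnSub G} (hlt : sng G v < E) :
    ∃ (u : V) (h : G.Adj v u), E.val.Adj v u ∧ edg h ≤ E := by
  have hv : v ∈ E.val.verts := sng_le_iff.1 hlt.le
  -- E has a vertex other than v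
  have hne : ∃ w ∈ E.val.verts, w ≠ v := by
    by_contra hcon
    push_neg at hcon
    have hverts : E.val.verts = {v} :=
      Set.eq_singleton_iff_unique_mem.2 ⟨hv, fun x hx => hcon x hx⟩
    have : E.val = G.singletonSubgraph v :=
      (eq_singletonSubgraph_iff_verts_eq E.val).2 hverts
    exact hlt.ne (Subtype.ext this).symm
  obtain ⟨w, hw, hwv⟩ := hne
  have hr : E.val.coe.Reachable ⟨v, hv⟩ ⟨w, hw⟩ := E.prop.coe ⟨v, hv⟩ ⟨w, hw⟩
  obtain ⟨p⟩ := hr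
  cases p with
  | nil => exact absurd rfl hwv
  | cons hadj q =>
    rename_i u
    have hA : E.val.Adj v u.val := hadj
    have hG : G.Adj v u.val := E.val.adj_sub hA
    exact ⟨u.val, hG, hA, Subtype.coe_le_coe.1 (subgraphOfAdj_le_of_adj E.val hA)⟩

lemma sng_covBy_edg {v w : V} (h : G.Adj v w) : sng G v ⋖ edg h := by
  refine ⟨sng_lt_edg h, ?_⟩
  intro K h1 h2
  obtain ⟨u, hu, _, hle⟩ := exists_edge_le h1
  have hverts : ({v, u} : Set V) ⊆ {v, w} := by
    have h3 : K.val.verts ⊆ ({v, w} : Set V) := by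
      simpa [edg, subgraphOfAdj_verts] using h2.le.1
    refine Set.Subset.trans ?_ h3
    simpa [edg, subgraphOfAdj_verts] using hle.1
  have huw : u = w := by
    have : u ∈ ({v, w} : Set V) := hverts (by simp)
    rcases this with h' | h'
    · exact absurd h' hu.ne'
    · exact h'
  subst huw
  have hedg : edg hu = edg h := rfl
  rw [hedg] at hle
  exact absurd (lt_of_le_of_lt hle h2) (lt_irrefl _)

lemma adj_iff_covBy {v w : V} :
    G.Adj v w ↔ v ≠ w ∧ ∃ E : ConnSub G, sng G v ⋖ E ∧ sng G w ⋖ E := by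
  constructor
  · intro h
    refine ⟨h.ne, edg h, sng_covBy_edg h, ?_⟩
    have : edg h.symm = edg h := by
      apply Subtype.ext
      exact subgraphOfAdj_symm h
    rw [← this]
    exact sng_covBy_edg h.symm
  · rintro ⟨hne, E, hv, hw⟩
    obtain ⟨u, hu, _, hle⟩ := exists_edge_le hv.lt
    have hE : edg hu = E := by
      rcases lt_or_eq_of_le hle with hlt | heq
      · exact absurd hlt (hv.2 (sng_lt_edg hu))
      · exact heq
    have hwE : w ∈ E.val.verts := sng_le_iff.1 hw.lt.le
    rw [← hE] at hwE
    have : w ∈ ({v, u} : Set V) := by simpa [edg, subgraphOfAdj_verts] using hwE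
    rcases this with h' | h'
    · exact absurd h'.symm hne
    · rw [h'] at *
      exact hu

lemma orderIso_isMin (e : ConnSub G ≃o ConnSub G') {H : ConnSub G} (h : IsMin H) :
    IsMin (e H) := by
  intro K hK
  have h1 : e.symm K ≤ H := by
    have := e.symm.le_iff_le.2 hK
    simpa using this
  calc e H ≤ e (e.symm K) := e.le_iff_le.2 (h h1)
    _ = K := e.apply_symm_apply K

/-- Map on vertices induced by an order isomorphism of connected-subgraph posets. -/
noncomputable def vmap (e : ConnSub G ≃o ConnSub G') (v : V) : V' :=
  (isMin_iff.1 (orderIso_isMin e (isMin_iff.2 ⟨v, rfl⟩))).choose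

lemma vmap_spec (e : ConnSub G ≃o ConnSub G') (v : V) :
    e (sng G v) = sng G' (vmap e v) :=
  (isMin_iff.1 (orderIso_isMin e (isMin_iff.2 ⟨v, rfl⟩))).choose_spec

lemma vmap_left_inv (e : ConnSub G ≃o ConnSub G') (v : V) :
    vmap e.symm (vmap e v) = v := by
  apply sng_injective G
  rw [← vmap_spec e.symm (vmap e v), ← vmap_spec e v, e.symm_apply_apply]

lemma adj_vmap (e : ConnSub G ≃o ConnSub G') {v w : V} :
    G.Adj v w ↔ G'.Adj (vmap e v) (vmap e w) := by
  rw [adj_iff_covBy (G := G), adj_iff_covBy (G := G')]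
  constructor
  · rintro ⟨hne, E, h1, h2⟩
    refine ⟨fun hEq => hne ?_, e E, ?_, ?_⟩
    · have := congrArg (vmap e.symm) hEq
      rwa [vmap_left_inv, vmap_left_inv] at this
    · have := apply_covBy_apply_iff e |>.2 h1
      rwa [vmap_spec e v] at this
    · have := apply_covBy_apply_iff e |>.2 h2
      rwa [vmap_spec e w] at this
  · rintro ⟨hne, E, h1, h2⟩
    refine ⟨fun hEq => hne (congrArg (vmap e) hEq), e.symm E, ?_, ?_⟩
    · have h1' := apply_covBy_apply_iff e.symm |>.2 h1
      rwa [vmap_spec e.symm, vmap_left_inv] at h1'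
    · have h2' := apply_covBy_apply_iff e.symm |>.2 h2
      rwa [vmap_spec e.symm, vmap_left_inv] at h2'

/-- A graph isomorphism built from an order isomorphism of connected-subgraph posets. -/
noncomputable def graphIsoOfOrderIso (e : ConnSub G ≃o ConnSub G') : G ≃g G' := by
  refine ⟨⟨vmap e, vmap e.symm, vmap_left_inv e, ?_⟩, ?_⟩
  · intro w
    have h : e.symm.symm = e := rfl
    rw [← h]
    exact vmap_left_inv e.symm w
  · intro v w
    exact (adj_vmap e).symm

/-- The image of a connected subgraph under a graph isomorphism is connected. -/
lemma connected_map (f : G ≃g G') {H : G.Subgraph} (h : H.Connected) :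
    (H.map f.toHom).Connected := by
  rw [Subgraph.connected_iff'] at h ⊢
  refine Connected.map ⟨fun x => ⟨f x.val, ⟨x.val, x.prop, rfl⟩⟩, ?_⟩ ?_ h
  · rintro ⟨a, ha⟩ ⟨b, hb⟩ hab
    exact ⟨a, b, hab, rfl, rfl⟩
  · rintro ⟨w', u, hu, rfl⟩
    exact ⟨⟨u, hu⟩, rfl⟩

lemma map_symm_map (f : G ≃g G') (H : G.Subgraph) :
    (H.map f.toHom).map f.symm.toHom = H := by
  rw [← Subgraph.map_comp]
  have : f.symm.toHom.comp f.toHom = Hom.id := by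
    ext v; simp
  rw [this, Subgraph.map_id]

/-- An order isomorphism of connected-subgraph posets built from a graph isomorphism. -/
def orderIsoOfGraphIso (f : G ≃g G') : ConnSub G ≃o ConnSub G' := by
  refine ⟨⟨fun H => ⟨H.val.map f.toHom, connected_map f H.prop⟩,
    fun H => ⟨H.val.map f.symm.toHom, connected_map f.symm H.prop⟩, ?_, ?_⟩, ?_⟩
  · intro H
    exact Subtype.ext (map_symm_map f H.val)
  · intro H
    apply Subtype.ext
    have : f.symm.symm = f := rfl
    rw [← this]
    exact map_symm_map f.symm H.val
  · intro H K
    simp only [Equiv.coe_fn_mk, ← Subtype.coe_le_coe]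
    constructor
    · intro h
      have := Subgraph.map_mono (f := f.symm.toHom) h
      rwa [map_symm_map f H.val, map_symm_map f K.val] at this
    · exact fun h => Subgraph.map_mono h

end Aux

theorem stmt_16 {V V' : Type*} [Fintype V] [Fintype V'] (G : SimpleGraph V)
    (G' : SimpleGraph V') (hG : G.Connected) (hG' : G'.Connected) :
    Nonempty (ConnSub G ≃o ConnSub G') ↔ Nonempty (G ≃g G') := by
  constructor
  · rintro ⟨e⟩
    exact ⟨graphIsoOfOrderIso e⟩
  · rintro ⟨f⟩
    exact ⟨orderIsoOfGraphIso f⟩
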